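/- Let H₁, H₂ be Hilbert spaces and P : H₁ → H₂ a bounded operator such that P*P and PP* have discrete spectrum with finite-dimensional eigenspaces and the heat traces Tr(exp(-tP*P)), Tr(exp(-tPP*)) are finite for all t > 0. Then for every t > 0, Tr(exp(-tP*P)) − Tr(exp(-tPP*)) = dim ker P − dim ker P* (the McKean–Singer formula). -/

import Mathlib

open ContinuousLinearMap

section MSAux

variable {H₁ H₂ : Type*}
  [NormedAddCommGroup H₁] [InnerProductSpace ℂ H₁] [CompleteSpace H₁]
  [NormedAddCommGroup H₂] [InnerProductSpace ℂ H₂] [CompleteSpace H₂]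

local notation "⟪" x ", " y "⟫" => @inner ℂ _ _ x y

lemma ms_fiber_finite {I : Type*} {μ : I → ℝ} {t : ℝ}
    (hsum : Summable fun i => Real.exp (-t * μ i)) (l : ℝ) :
    {i | μ i = l}.Finite := by
  have h : ∀ᶠ i in Filter.cofinite, Real.exp (-t * μ i) < Real.exp (-t * l) :=
    hsum.tendsto_cofinite_zero.eventually (gt_mem_nhds (Real.exp_pos _))
  rw [Filter.eventually_cofinite] at h
  exact h.subset (fun i hi => by simp [Set.mem_setOf_eq.mp hi])

lemma ms_coeff_zero {I : Type*} (T : H₁ →L[ℂ] H₁) (hT : adjoint T = T)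
    (b : HilbertBasis I ℂ H₁) (μ : I → ℝ) (hμ : ∀ i, T (b i) = (μ i : ℂ) • b i)
    {x : H₁} {l : ℝ} (hx : T x = (l : ℂ) • x) {i : I} (him : μ i ≠ l) :
    ⟪b i, x⟫ = 0 := by
  have h1 : ⟪b i, T x⟫ = (l : ℂ) * ⟪b i, x⟫ := by rw [hx, inner_smul_right]
  have h2 : ⟪b i, T x⟫ = (μ i : ℂ) * ⟪b i, x⟫ := by
    have h := adjoint_inner_left T x (b i)
    rw [hT] at h
    rw [← h, hμ, inner_smul_left, Complex.conj_ofReal]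
  have h3 : ((μ i : ℂ) - l) * ⟪b i, x⟫ = 0 := by
    rw [sub_mul, ← h2, ← h1, sub_self]
  rcases mul_eq_zero.mp h3 with h | h
  · exact absurd (by exact_mod_cast sub_eq_zero.mp h) him
  · exact h

lemma ms_mem_span {I : Type*} (T : H₁ →L[ℂ] H₁) (hT : adjoint T = T)
    (b : HilbertBasis I ℂ H₁) (μ : I → ℝ) (hμ : ∀ i, T (b i) = (μ i : ℂ) • b i)
    {x : H₁} {l : ℝ} (hx : T x = (l : ℂ) • x) (hfin : {i | μ i = l}.Finite) :
    x ∈ Submodule.span ℂ (b '' {i | μ i = l}) := by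
  classical
  have hrep : HasSum (fun i => ⟪b i, x⟫ • b i) x := by
    simpa [b.repr_apply_apply] using b.hasSum_repr x
  have hx2 : x = ∑ i ∈ hfin.toFinset, ⟪b i, x⟫ • b i := by
    refine (HasSum.unique hrep (hasSum_sum_of_ne_finset_zero (fun i hi => ?_)))
    rw [ms_coeff_zero T hT b μ hμ hx (by simpa using hi), zero_smul]
  rw [hx2]
  exact Submodule.sum_mem _ fun i hi =>
    Submodule.smul_mem _ _ (Submodule.subset_span ⟨i, by simpa using hi, rfl⟩)

lemma ms_selfadj (Q : H₁ →L[ℂ] H₂) : adjoint (adjoint Q ∘L Q) = adjoint Q ∘L Q := by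
  rw [adjoint_comp, adjoint_adjoint]

lemma ms_normSq (Q : H₁ →L[ℂ] H₂) {I : Type*} (b : HilbertBasis I ℂ H₁) (μ : I → ℝ)
    (hμ : ∀ i, (adjoint Q ∘L Q) (b i) = (μ i : ℂ) • b i) (i : I) :
    (‖Q (b i)‖ : ℝ) ^ 2 = μ i := by
  have h1 : ⟪adjoint Q (Q (b i)), b i⟫ = ⟪Q (b i), Q (b i)⟫ :=
    adjoint_inner_left Q (b i) (Q (b i))
  have h2 : ⟪adjoint Q (Q (b i)), b i⟫ = (μ i : ℂ) := by
    have := hμ i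
    rw [ContinuousLinearMap.comp_apply] at this
    rw [this, inner_smul_left, Complex.conj_ofReal,
      inner_self_eq_norm_sq_to_K, b.orthonormal.1 i]
    norm_num
  have h3 : ⟪Q (b i), Q (b i)⟫ = ((‖Q (b i)‖ ^ 2 : ℝ) : ℂ) := by
    rw [inner_self_eq_norm_sq_to_K]; norm_num
  have := h2.symm.trans (h1.trans h3)
  exact_mod_cast this.symm

lemma ms_nonneg (Q : H₁ →L[ℂ] H₂) {I : Type*} (b : HilbertBasis I ℂ H₁) (μ : I → ℝ)
    (hμ : ∀ i, (adjoint Q ∘L Q) (b i) = (μ i : ℂ) • b i) (i : I) : 0 ≤ μ i := by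
  rw [← ms_normSq Q b μ hμ i]; positivity

lemma ms_ker_eq (Q : H₁ →L[ℂ] H₂) {I : Type*} (b : HilbertBasis I ℂ H₁) (μ : I → ℝ)
    (hμ : ∀ i, (adjoint Q ∘L Q) (b i) = (μ i : ℂ) • b i)
    (hfin : {i | μ i = 0}.Finite) :
    (LinearMap.ker (Q : H₁ →ₗ[ℂ] H₂) : Submodule ℂ H₁) = Submodule.span ℂ (b '' {i | μ i = 0}) := by
  apply le_antisymm
  · intro x hx
    have hx0 : Q x = 0 := hx
    have hx' : (adjoint Q ∘L Q) x = ((0 : ℝ) : ℂ) • x := by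
      simp [ContinuousLinearMap.comp_apply, hx0]
    exact ms_mem_span _ (ms_selfadj Q) b μ hμ hx' hfin
  · rw [Submodule.span_le]
    rintro _ ⟨i, hi, rfl⟩
    have h0 : (‖Q (b i)‖ : ℝ) ^ 2 = 0 := by rw [ms_normSq Q b μ hμ i]; exact hi
    have : Q (b i) = 0 := by
      rwa [pow_eq_zero_iff (by norm_num), norm_eq_zero] at h0
    exact this

lemma ms_finrank_ker (Q : H₁ →L[ℂ] H₂) {I : Type*} (b : HilbertBasis I ℂ H₁) (μ : I → ℝ)
    (hμ : ∀ i, (adjoint Q ∘L Q) (b i) = (μ i : ℂ) • b i)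
    (hfin : {i | μ i = 0}.Finite) :
    Module.finrank ℂ (LinearMap.ker (Q : H₁ →ₗ[ℂ] H₂)) = Nat.card {i | μ i = 0} := by
  classical
  haveI := hfin.fintype
  have hli : LinearIndependent ℂ (fun i : {i | μ i = 0} => b i) :=
    (b.orthonormal.comp Subtype.val Subtype.val_injective).linearIndependent
  have himg : b '' {i | μ i = 0} = Set.range (fun i : {i | μ i = 0} => b i) :=
    Set.image_eq_range _ _
  rw [ms_ker_eq Q b μ hμ hfin, himg, Nat.card_eq_fintype_card]
  exact finrank_span_eq_card hli

lemma ms_card_le (P : H₁ →L[ℂ] H₂) {I J : Type*}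
    (b₁ : HilbertBasis I ℂ H₁) (μ : I → ℝ)
    (hμ : ∀ i, (adjoint P ∘L P) (b₁ i) = (μ i : ℂ) • b₁ i)
    (b₂ : HilbertBasis J ℂ H₂) (ν : J → ℝ)
    (hν : ∀ j, (P ∘L adjoint P) (b₂ j) = (ν j : ℂ) • b₂ j)
    {l : ℝ} (hl : 0 < l)
    (hfinI : {i | μ i = l}.Finite) (hfinJ : {j | ν j = l}.Finite) :
    Nat.card {i | μ i = l} ≤ Nat.card {j | ν j = l} := by
  classical
  haveI := hfinI.fintype
  haveI := hfinJ.fintype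
  -- the scaled images form an orthonormal family
  set w : {i | μ i = l} → H₂ := fun i => ((Real.sqrt l)⁻¹ : ℂ) • P (b₁ i) with hw
  have hinner : ∀ i i' : I, ⟪P (b₁ i), P (b₁ i')⟫ = (μ i : ℂ) * ⟪b₁ i, b₁ i'⟫ := by
    intro i i'
    rw [← adjoint_inner_left P (b₁ i') (P (b₁ i)), ← ContinuousLinearMap.comp_apply,
      hμ, inner_smul_left, Complex.conj_ofReal]
  have hwo : Orthonormal ℂ w := by
    rw [orthonormal_iff_ite]
    intro i i'
    have hii : (i : I) = (i' : I) ↔ i = i' := Subtype.val_inj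
    rw [hw]
    simp only [inner_smul_left, inner_smul_right, hinner]
    rw [orthonormal_iff_ite.mp b₁.orthonormal i i']
    have hs : (Real.sqrt l)⁻¹ * ((Real.sqrt l)⁻¹ * l) = 1 := by
      rw [← mul_assoc, ← mul_inv, Real.mul_self_sqrt hl.le]
      exact inv_mul_cancel₀ hl.ne'
    by_cases h : i = i'
    · subst h
      rw [if_pos rfl, if_pos rfl, show μ (i : I) = l from i.2, mul_one,
        ← Complex.ofReal_inv, Complex.conj_ofReal]
      exact_mod_cast hs
    · rw [if_neg (fun hh => h (Subtype.val_inj.mp hh)), if_neg h]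
      ring
  have hmem : ∀ i : {i | μ i = l}, w i ∈ Submodule.span ℂ (b₂ '' {j | ν j = l}) := by
    intro i
    refine Submodule.smul_mem _ _ ?_
    have hadj : adjoint (P ∘L adjoint P) = P ∘L adjoint P := by
      have := ms_selfadj (adjoint P)
      rwa [adjoint_adjoint] at this
    refine ms_mem_span (P ∘L adjoint P) hadj b₂ ν hν ?_ hfinJ
    have h1 : (P ∘L adjoint P) (P (b₁ i)) = P ((adjoint P ∘L P) (b₁ i)) := rfl
    rw [h1, hμ, map_smul]
    congr 1
    exact Complex.ofReal_inj.mpr i.2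
  calc Nat.card {i | μ i = l} = Fintype.card {i | μ i = l} := Nat.card_eq_fintype_card
    _ = Module.finrank ℂ (Submodule.span ℂ (Set.range w)) :=
        (finrank_span_eq_card hwo.linearIndependent).symm
    _ ≤ Module.finrank ℂ (Submodule.span ℂ (b₂ '' {j | ν j = l})) := by
        haveI : FiniteDimensional ℂ (Submodule.span ℂ (b₂ '' {j | ν j = l})) :=
          FiniteDimensional.span_of_finite ℂ (hfinJ.image b₂)
        refine Submodule.finrank_mono ?_
        rw [Submodule.span_le]
        rintro _ ⟨i, rfl⟩
        exact hmem i
    _ = Fintype.card {j | ν j = l} := by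
        have himg : b₂ '' {j | ν j = l} = Set.range (fun j : {j | ν j = l} => b₂ j) :=
          Set.image_eq_range _ _
        rw [himg]
        exact finrank_span_eq_card
          ((b₂.orthonormal.comp Subtype.val Subtype.val_injective).linearIndependent)
    _ = Nat.card {j | ν j = l} := Nat.card_eq_fintype_card.symm

end MSAux

theorem mckean_singer {H₁ H₂ : Type*}
    [NormedAddCommGroup H₁] [InnerProductSpace ℂ H₁] [CompleteSpace H₁]
    [NormedAddCommGroup H₂] [InnerProductSpace ℂ H₂] [CompleteSpace H₂]
    {I J : Type*} (P : H₁ →L[ℂ] H₂)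
    (b₁ : HilbertBasis I ℂ H₁) (μ : I → ℝ)
    (hμ : ∀ i, (adjoint P ∘L P) (b₁ i) = (μ i : ℂ) • b₁ i)
    (b₂ : HilbertBasis J ℂ H₂) (ν : J → ℝ)
    (hν : ∀ j, (P ∘L adjoint P) (b₂ j) = (ν j : ℂ) • b₂ j)
    [FiniteDimensional ℂ (LinearMap.ker (P : H₁ →ₗ[ℂ] H₂))]
    [FiniteDimensional ℂ (LinearMap.ker (adjoint P : H₂ →ₗ[ℂ] H₁))]
    (t : ℝ) (ht : 0 < t)
    (hsum₁ : Summable fun i => Real.exp (-t * μ i))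
    (hsum₂ : Summable fun j => Real.exp (-t * ν j)) :
    (∑' i, Real.exp (-t * μ i)) - (∑' j, Real.exp (-t * ν j)) =
      (Module.finrank ℂ (LinearMap.ker (P : H₁ →ₗ[ℂ] H₂)) : ℝ) -
        (Module.finrank ℂ (LinearMap.ker (adjoint P : H₂ →ₗ[ℂ] H₁)) : ℝ) := by
  classical
  have hμ0 : ∀ i, 0 ≤ μ i := ms_nonneg P b₁ μ hμ
  have hν' : ∀ j, (adjoint (adjoint P) ∘L adjoint P) (b₂ j) = (ν j : ℂ) • b₂ j := by
    intro j; rw [adjoint_adjoint]; exact hν j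
  have hμ' : ∀ i, (adjoint P ∘L adjoint (adjoint P)) (b₁ i) = (μ i : ℂ) • b₁ i := by
    intro i; rw [adjoint_adjoint]; exact hμ i
  have hν0 : ∀ j, 0 ≤ ν j := ms_nonneg (adjoint P) b₂ ν hν'
  have hfinμ : ∀ l, {i | μ i = l}.Finite := ms_fiber_finite hsum₁
  have hfinν : ∀ l, {j | ν j = l}.Finite := ms_fiber_finite hsum₂
  have hcard : ∀ l : ℝ, l ≠ 0 → Nat.card {i | μ i = l} = Nat.card {j | ν j = l} := by
    intro l hl
    rcases lt_or_gt_of_ne hl with h | h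
    · have e1 : {i | μ i = l} = ∅ := by
        ext i
        simp only [Set.mem_setOf_eq, Set.mem_empty_iff_false, iff_false]
        intro hi
        exact absurd (hi ▸ hμ0 i) (not_le.mpr h)
      have e2 : {j | ν j = l} = ∅ := by
        ext j
        simp only [Set.mem_setOf_eq, Set.mem_empty_iff_false, iff_false]
        intro hj
        exact absurd (hj ▸ hν0 j) (not_le.mpr h)
      rw [e1, e2]
      simp
    · exact le_antisymm
        (ms_card_le P b₁ μ hμ b₂ ν hν h (hfinμ l) (hfinν l))
        (ms_card_le (adjoint P) b₂ ν hν' b₁ μ hμ' h (hfinν l) (hfinμ l))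
  have hk1 : Module.finrank ℂ (LinearMap.ker (P : H₁ →ₗ[ℂ] H₂)) = Nat.card {i | μ i = 0} :=
    ms_finrank_ker P b₁ μ hμ (hfinμ 0)
  have hk2 : Module.finrank ℂ (LinearMap.ker (adjoint P : H₂ →ₗ[ℂ] H₁)) = Nat.card {j | ν j = 0} :=
    ms_finrank_ker (adjoint P) b₂ ν hν' (hfinν 0)
  have hsplit₁ : (∑' i, Real.exp (-t * μ i)) =
      (∑' i : ↥{i | μ i = 0}, Real.exp (-t * μ ↑i)) +
        ∑' i : ↥({i | μ i = 0}ᶜ), Real.exp (-t * μ ↑i) :=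
    (Summable.tsum_subtype_add_tsum_subtype_compl hsum₁ {i | μ i = 0}).symm
  have hsplit₂ : (∑' j, Real.exp (-t * ν j)) =
      (∑' j : ↥{j | ν j = 0}, Real.exp (-t * ν ↑j)) +
        ∑' j : ↥({j | ν j = 0}ᶜ), Real.exp (-t * ν ↑j) :=
    (Summable.tsum_subtype_add_tsum_subtype_compl hsum₂ {j | ν j = 0}).symm
  have hS1 : (∑' i : ↥{i | μ i = 0}, Real.exp (-t * μ ↑i)) =
      (Nat.card {i | μ i = 0} : ℝ) := by
    haveI := (hfinμ 0).fintype
    rw [tsum_fintype, Nat.card_eq_fintype_card]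
    have h1 : ∀ i : ↥{i | μ i = 0}, Real.exp (-t * μ ↑i) = 1 := fun i => by
      rw [show μ (i : I) = 0 from i.2, mul_zero, Real.exp_zero]
    rw [Finset.sum_congr rfl (fun i _ => h1 i)]
    simp
  have hT1 : (∑' j : ↥{j | ν j = 0}, Real.exp (-t * ν ↑j)) =
      (Nat.card {j | ν j = 0} : ℝ) := by
    haveI := (hfinν 0).fintype
    rw [tsum_fintype, Nat.card_eq_fintype_card]
    have h1 : ∀ j : ↥{j | ν j = 0}, Real.exp (-t * ν ↑j) = 1 := fun j => by
      rw [show ν (j : J) = 0 from j.2, mul_zero, Real.exp_zero]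
    rw [Finset.sum_congr rfl (fun j _ => h1 j)]
    simp
  have fibers : ∀ c : ℝ,
      {a : ↥({i | μ i = 0}ᶜ) // μ ↑a = c} ≃ {b : ↥({j | ν j = 0}ᶜ) // ν ↑b = c} := by
    intro c
    by_cases hc : c = 0
    · subst hc
      haveI : IsEmpty {a : ↥({i | μ i = 0}ᶜ) // μ ↑a = 0} := ⟨fun a => a.1.2 a.2⟩
      haveI : IsEmpty {b : ↥({j | ν j = 0}ᶜ) // ν ↑b = 0} := ⟨fun b => b.1.2 b.2⟩
      exact Equiv.equivOfIsEmpty _ _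
    · have e₁ : {a : ↥({i | μ i = 0}ᶜ) // μ ↑a = c} ≃ ↥{i | μ i = c} :=
        { toFun := fun a => ⟨a.1.1, a.2⟩
          invFun := fun i => ⟨⟨i.1, fun h => hc ((i.2 : μ i.1 = c).symm.trans h)⟩, i.2⟩
          left_inv := fun a => rfl
          right_inv := fun i => rfl }
      have e₂ : {b : ↥({j | ν j = 0}ᶜ) // ν ↑b = c} ≃ ↥{j | ν j = c} :=
        { toFun := fun a => ⟨a.1.1, a.2⟩
          invFun := fun j => ⟨⟨j.1, fun h => hc ((j.2 : ν j.1 = c).symm.trans h)⟩, j.2⟩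
          left_inv := fun a => rfl
          right_inv := fun j => rfl }
      haveI := (hfinμ c).fintype
      haveI := (hfinν c).fintype
      have hc2 : Fintype.card ↥{i | μ i = c} = Fintype.card ↥{j | ν j = c} := by
        have := hcard c hc
        rwa [Nat.card_eq_fintype_card, Nat.card_eq_fintype_card] at this
      exact e₁.trans ((Fintype.equivOfCardEq hc2).trans e₂.symm)
  have key : (∑' i : ↥({i | μ i = 0}ᶜ), Real.exp (-t * μ ↑i)) =
      ∑' j : ↥({j | ν j = 0}ᶜ), Real.exp (-t * ν ↑j) := by
    set e := Equiv.ofFiberEquiv (f := fun a : ↥({i | μ i = 0}ᶜ) => μ ↑a)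
      (g := fun b : ↥({j | ν j = 0}ᶜ) => ν ↑b) fibers with he'
    have he : ∀ a, ν ↑(e a) = μ ↑a := fun a => Equiv.ofFiberEquiv_map fibers a
    calc (∑' a : ↥({i | μ i = 0}ᶜ), Real.exp (-t * μ ↑a))
        = ∑' a : ↥({i | μ i = 0}ᶜ), Real.exp (-t * ν ↑(e a)) := by
          exact tsum_congr fun a => by rw [he a]
      _ = ∑' b : ↥({j | ν j = 0}ᶜ), Real.exp (-t * ν ↑b) :=
          e.tsum_eq fun b => Real.exp (-t * ν ↑b)
  rw [hsplit₁, hsplit₂, hS1, hT1, key, hk1, hk2]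
  ring
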